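/- arXiv:2507.08462 — 7 statements merged into one kernel-verified Lean document; each statement's English description precedes it below -/
import Mathlib

section
/- Let 0 < α < 1, x ≥ 0, and set u = x − α(e^x − 1). Assume u ≥ 0. Then x is the smallest nonnegative solution of y = u + α(e^y − 1) if and only if α e^x ≤ 1. -/
theorem stmt_3 (α x : ℝ) (hα0 : 0 < α) (hα1 : α < 1) (hx : 0 ≤ x)
    (u : ℝ) (hu_def : u = x - α * (Real.exp x - 1)) (hu : 0 ≤ u) :
    IsLeast {y : ℝ | 0 ≤ y ∧ y = u + α * (Real.exp y - 1)} x ↔ α * Real.exp x ≤ 1 := by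
  set f : ℝ → ℝ := fun y => u + α * (Real.exp y - 1) - y with hf
  have hderiv : ∀ t : ℝ, HasDerivAt f (α * Real.exp t - 1) t := by
    intro t
    have h1 : HasDerivAt (fun y : ℝ => u + α * (Real.exp y - 1)) (α * Real.exp t) t := by
      simpa using (((Real.hasDerivAt_exp t).sub_const 1).const_mul α).const_add u
    exact h1.sub (hasDerivAt_id t)
  have hcont : Continuous f := by
    have : Continuous fun y : ℝ => u + α * (Real.exp y - 1) - y := by continuity
    simpa [hf] using this
  have hfx : f x = 0 := by simp only [hf, hu_def]; ring
  have hxmem : x ∈ {y : ℝ | 0 ≤ y ∧ y = u + α * (Real.exp y - 1)} := by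
    refine ⟨hx, ?_⟩; rw [hu_def]; ring
  constructor
  · intro hleast
    by_contra h
    push_neg at h
    set c : ℝ := -Real.log α with hc
    have hc0 : 0 < c := by
      have : Real.log α < 0 := Real.log_neg hα0 hα1
      linarith
    have hec : Real.exp c = 1 / α := by
      rw [hc, Real.exp_neg, Real.exp_log hα0]
      ring
    have hcx : c < x := by
      have hex : Real.exp c < Real.exp x := by
        rw [hec]
        rw [div_lt_iff₀ hα0] at *
        nlinarith [Real.exp_pos x]
      exact (Real.exp_lt_exp).mp hex
    -- f is strictly monotone on [c, x], so f c < f x = 0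
    have hmono : StrictMonoOn f (Set.Icc c x) := by
      apply strictMonoOn_of_deriv_pos (convex_Icc c x) hcont.continuousOn
      intro t ht
      rw [interior_Icc] at ht
      rw [(hderiv t).deriv]
      have : Real.exp c < Real.exp t := Real.exp_lt_exp.mpr ht.1
      rw [hec] at this
      have := (div_lt_iff₀ hα0).mp this
      nlinarith
    have hfc : f c < 0 := by
      have := hmono ⟨le_refl c, hcx.le⟩ ⟨hcx.le, le_refl x⟩ hcx
      linarith [hfx ▸ this]
    have hf0 : 0 ≤ f 0 := by simp [hf]; linarith
    -- IVT on [0, c]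
    have hsub : Set.Icc (f c) (f 0) ⊆ f '' Set.Icc 0 c :=
      intermediate_value_Icc' hc0.le hcont.continuousOn
    obtain ⟨y, hy, hfy⟩ := hsub ⟨hfc.le, hf0⟩
    have hymem : y ∈ {y : ℝ | 0 ≤ y ∧ y = u + α * (Real.exp y - 1)} := by
      refine ⟨hy.1, ?_⟩
      have : u + α * (Real.exp y - 1) - y = 0 := hfy
      linarith
    have := hleast.2 hymem
    linarith [hy.2]
  · intro hle
    refine ⟨hxmem, ?_⟩
    intro y hy
    by_contra hxy
    push_neg at hxy
    have hanti : StrictAntiOn f (Set.Icc 0 x) := by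
      apply strictAntiOn_of_deriv_neg (convex_Icc 0 x) hcont.continuousOn
      intro t ht
      rw [interior_Icc] at ht
      rw [(hderiv t).deriv]
      have : Real.exp t < Real.exp x := Real.exp_lt_exp.mpr ht.2
      nlinarith
    have hfy : f y = 0 := by
      have := hy.2
      simp [hf]; linarith
    have := hanti ⟨hy.1, hxy.le⟩ ⟨hx, le_refl x⟩ hxy
    rw [hfx, hfy] at this
    exact lt_irrefl 0 this
end

section
/- Let H be an M×M matrix with nonnegative entries, u ∈ ℝ_+^M, and suppose x ∈ ℝ_+^M satisfies x = u + H(e^x − 1) (exponential coordinatewise). Then for every n ≥ 0, ψ_u^{n+1}(0) − ψ_u^n(0) ≼ (H·diag(e^x))^n u, where ψ_u(y) = u + H(e^y − 1). Consequently, x' := lim_n ψ_u^n(0) satisfies x' ≼ Σ_{n≥0} (H·diag(e^x))^n u. -/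
open Filter

private lemma mulVec_mono' {M : ℕ} {A : Matrix (Fin M) (Fin M) ℝ}
    (hA : ∀ i j, 0 ≤ A i j) {v w : Fin M → ℝ} (h : v ≤ w) :
    A.mulVec v ≤ A.mulVec w := by
  intro i
  simp only [Matrix.mulVec, dotProduct]
  exact Finset.sum_le_sum fun j _ => mul_le_mul_of_nonneg_left (h j) (hA i j)

private lemma exp_diff_le {a b c : ℝ} (hab : b ≤ a) (hac : a ≤ c) :
    Real.exp a - Real.exp b ≤ Real.exp c * (a - b) := by
  have h1 : b - a + 1 ≤ Real.exp (b - a) := Real.add_one_le_exp _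
  have h2 : Real.exp (b - a) * Real.exp a = Real.exp b := by
    rw [← Real.exp_add]; ring_nf
  have h3 : Real.exp a ≤ Real.exp c := Real.exp_le_exp.2 hac
  have h4 : (0:ℝ) < Real.exp a := Real.exp_pos a
  nlinarith [Real.exp_pos c]

theorem stmt_6 {M : ℕ} (H : Matrix (Fin M) (Fin M) ℝ)
    (hH : ∀ i j, 0 ≤ H i j) (u : Fin M → ℝ) (hu : 0 ≤ u)
    (x : Fin M → ℝ) (hx : 0 ≤ x)
    (hfix : x = u + H.mulVec (fun i => Real.exp (x i) - 1))
    (ψ : (Fin M → ℝ) → (Fin M → ℝ))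
    (hψ : ∀ y, ψ y = u + H.mulVec (fun i => Real.exp (y i) - 1))
    (x' : Fin M → ℝ)
    (hx' : Tendsto (fun n : ℕ => ψ^[n] 0) atTop (nhds x')) :
    (∀ n : ℕ,
        ψ^[n + 1] 0 - ψ^[n] 0 ≤
          ((H * Matrix.diagonal fun i => Real.exp (x i)) ^ n).mulVec u) ∧
    (∀ m : Fin M,
        ENNReal.ofReal (x' m) ≤
          ∑' n : ℕ,
            ENNReal.ofReal
              (((H * Matrix.diagonal fun i => Real.exp (x i)) ^ n).mulVec u m)) := by
  set D : Matrix (Fin M) (Fin M) ℝ := Matrix.diagonal fun i => Real.exp (x i) with hD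
  set A : Matrix (Fin M) (Fin M) ℝ := H * D with hA
  -- entries of A and A^n are nonneg
  have hDnn : ∀ i j, 0 ≤ D i j := by
    intro i j
    rw [hD, Matrix.diagonal]
    by_cases h : i = j <;> simp [h, Real.exp_nonneg]
  have hAnn : ∀ i j, 0 ≤ A i j := by
    intro i j
    rw [hA, Matrix.mul_apply]
    exact Finset.sum_nonneg fun k _ => mul_nonneg (hH i k) (hDnn k j)
  have hApow : ∀ n : ℕ, ∀ i j, 0 ≤ (A ^ n) i j := by
    intro n
    induction n with
    | zero =>
      intro i j
      rw [pow_zero, Matrix.one_apply]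
      by_cases h : i = j <;> simp [h]
    | succ n ih =>
      intro i j
      rw [pow_succ, Matrix.mul_apply]
      exact Finset.sum_nonneg fun k _ => mul_nonneg (ih i k) (hAnn k j)
  -- ψ 0 = u
  have hψ0 : ψ 0 = u := by
    rw [hψ]
    have : (fun i => Real.exp ((0 : Fin M → ℝ) i) - 1) = 0 := by
      funext i; simp
    rw [this, Matrix.mulVec_zero, add_zero]
  -- ψ is monotone
  have hψmono : ∀ y z : Fin M → ℝ, y ≤ z → ψ y ≤ ψ z := by
    intro y z h
    rw [hψ, hψ]
    refine add_le_add le_rfl (mulVec_mono' hH fun i => ?_)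
    exact sub_le_sub_right (Real.exp_le_exp.2 (h i)) 1
  -- ψ x = x
  have hψx : ψ x = x := by rw [hψ, ← hfix]
  -- ψ^[n] 0 ≤ x
  have hle_x : ∀ n : ℕ, ψ^[n] 0 ≤ x := by
    intro n
    induction n with
    | zero => simpa using hx
    | succ n ih =>
      rw [Function.iterate_succ_apply']
      calc ψ (ψ^[n] 0) ≤ ψ x := hψmono _ _ ih
        _ = x := hψx
  -- the sequence is monotone
  have hmono : ∀ n : ℕ, ψ^[n] 0 ≤ ψ^[n + 1] 0 := by
    intro n
    induction n with
    | zero => simpa [hψ0] using hu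
    | succ n ih =>
      rw [Function.iterate_succ_apply', Function.iterate_succ_apply']
      exact hψmono _ _ ih
  -- main induction
  have main : ∀ n : ℕ, ψ^[n + 1] 0 - ψ^[n] 0 ≤ (A ^ n).mulVec u := by
    intro n
    induction n with
    | zero =>
      simp [hψ0]
    | succ n ih =>
      set a := ψ^[n + 1] 0
      set b := ψ^[n] 0
      have hab : b ≤ a := hmono n
      have hax : a ≤ x := hle_x (n + 1)
      have key : ∀ y z : Fin M → ℝ, ψ y - ψ z =
          H.mulVec (fun j => Real.exp (y j) - Real.exp (z j)) := by
        intro y z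
        rw [hψ, hψ]
        have : (fun j => Real.exp (y j) - Real.exp (z j)) =
            (fun j => Real.exp (y j) - 1) - (fun j => Real.exp (z j) - 1) := by
          funext j; simp
        rw [this, Matrix.mulVec_sub]
        abel
      have h2 : ψ^[n + 1 + 1] 0 = ψ a := Function.iterate_succ_apply' ψ (n + 1) 0
      have h3 : a = ψ b := Function.iterate_succ_apply' ψ n 0
      have step1 : ψ^[n + 1 + 1] 0 - ψ^[n + 1] 0 =
          H.mulVec (fun j => Real.exp (a j) - Real.exp (b j)) := by
        have := key a b
        rw [← h3] at this
        rw [h2]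
        exact this
      have step2 : (fun j => Real.exp (a j) - Real.exp (b j)) ≤
          D.mulVec (a - b) := by
        intro j
        have : (D.mulVec (a - b)) j = Real.exp (x j) * (a j - b j) := by
          simp [hD, Matrix.mulVec_diagonal]
        rw [this]
        exact exp_diff_le (hab j) (hax j)
      calc ψ^[n + 1 + 1] 0 - ψ^[n + 1] 0
          = H.mulVec (fun j => Real.exp (a j) - Real.exp (b j)) := step1
        _ ≤ H.mulVec (D.mulVec (a - b)) := mulVec_mono' hH step2
        _ = A.mulVec (a - b) := by rw [Matrix.mulVec_mulVec]
        _ ≤ A.mulVec ((A ^ n).mulVec u) := mulVec_mono' hAnn ih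
        _ = (A ^ (n + 1)).mulVec u := by
            rw [Matrix.mulVec_mulVec, ← pow_succ']
  refine ⟨main, fun m => ?_⟩
  -- hpartial sum bound
  have hpartial : ∀ N : ℕ, ψ^[N] 0 m ≤ ∑ n ∈ Finset.range N, ((A ^ n).mulVec u) m := by
    intro N
    have : ψ^[N] 0 m = ∑ n ∈ Finset.range N, (ψ^[n + 1] 0 m - ψ^[n] 0 m) := by
      rw [Finset.sum_range_sub (fun n => ψ^[n] 0 m)]
      simp
    rw [this]
    exact Finset.sum_le_sum fun n _ => by
      have := main n m
      simpa using this
  have htend : Tendsto (fun N : ℕ => ENNReal.ofReal (ψ^[N] 0 m)) atTop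
      (nhds (ENNReal.ofReal (x' m))) :=
    (ENNReal.continuous_ofReal.tendsto _).comp (tendsto_pi_nhds.1 hx' m)
  refine le_of_tendsto htend (Eventually.of_forall fun N => ?_)
  calc ENNReal.ofReal (ψ^[N] 0 m)
      ≤ ENNReal.ofReal (∑ n ∈ Finset.range N, ((A ^ n).mulVec u) m) :=
        ENNReal.ofReal_le_ofReal (hpartial N)
    _ = ∑ n ∈ Finset.range N, ENNReal.ofReal (((A ^ n).mulVec u) m) := by
        refine ENNReal.ofReal_sum_of_nonneg fun n _ => ?_
        simp only [Matrix.mulVec, dotProduct]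
        exact Finset.sum_nonneg fun j _ => mul_nonneg (hApow n m j) (hu j)
    _ ≤ ∑' n : ℕ, ENNReal.ofReal (((A ^ n).mulVec u) m) :=
        ENNReal.sum_le_tsum _
end

section
/- Let (z_n) be a sequence in ℝ_+^M with z_{n+1} ≼ H(e^{z_n} − 1) for all n, where H is a nonnegative M×M matrix with spectral radius < 1, and suppose |z_n|_∞ → 0 and z_0 ≼ L. Then there exists a constant C < ∞ such that z_n ≼ C H^n L for all n. -/
open scoped ENNReal NNReal
attribute [local instance] Matrix.linftyOpNormedRing Matrix.linftyOpNormedAlgebra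

section aux
variable {M : ℕ}

lemma aux_map_norm (H : Matrix (Fin M) (Fin M) ℝ) (m : ℕ) :
    ‖(H.map (Complex.ofReal ·)) ^ m‖ = ‖H ^ m‖ := by
  have h0 : (H.map (Complex.ofReal ·)) ^ m = (H ^ m).map (Complex.ofReal ·) := by
    rw [show (Complex.ofReal ·) = ⇑Complex.ofRealHom from rfl, ← RingHom.mapMatrix_apply,
      ← RingHom.mapMatrix_apply, map_pow]
  have h : ‖(H ^ m).map (Complex.ofReal ·)‖₊ = ‖H ^ m‖₊ := by
    rw [Matrix.linfty_opNNNorm_def, Matrix.linfty_opNNNorm_def]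
    exact Finset.sup_congr rfl fun i _ => Finset.sum_congr rfl fun j _ => by
      simp [Matrix.map_apply]
  rw [h0, ← coe_nnnorm, ← coe_nnnorm, h]

lemma aux_pow_nonneg (H : Matrix (Fin M) (Fin M) ℝ) (hH : ∀ i j, 0 ≤ H i j) (n : ℕ) :
    ∀ i j, 0 ≤ (H ^ n) i j := by
  induction n with
  | zero => intro i j; by_cases h : i = j <;> simp [pow_zero, Matrix.one_apply, h]
  | succ n ih =>
    intro i j
    rw [pow_succ, Matrix.mul_apply]
    exact Finset.sum_nonneg fun k _ => mul_nonneg (ih i k) (hH k j)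

lemma aux_mulVec_mono (A : Matrix (Fin M) (Fin M) ℝ) (hA : ∀ i j, 0 ≤ A i j)
    {v w : Fin M → ℝ} (h : v ≤ w) : A.mulVec v ≤ A.mulVec w := by
  intro i
  simp only [Matrix.mulVec, dotProduct]
  exact Finset.sum_le_sum fun j _ => mul_le_mul_of_nonneg_left (h j) (hA i j)

lemma aux_exp_sub_one (x b : ℝ) (hx : 0 ≤ x) (hb : x ≤ b) :
    Real.exp x - 1 ≤ x * Real.exp b := by
  have h1 : -x + 1 ≤ Real.exp (-x) := Real.add_one_le_exp (-x)
  have h2 : Real.exp (-x) * Real.exp x = 1 := by rw [← Real.exp_add]; simp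
  have h3 : 0 < Real.exp x := Real.exp_pos x
  have h4 : Real.exp x ≤ Real.exp b := Real.exp_le_exp.mpr hb
  nlinarith [mul_le_mul_of_nonneg_left h4 hx]

end aux

theorem stmt_12 {M : ℕ} (H : Matrix (Fin M) (Fin M) ℝ)
    (hH : ∀ i j, 0 ≤ H i j)
    (hspr : ∀ μ ∈ spectrum ℂ (H.map (Complex.ofReal ·)), ‖μ‖ < 1)
    (L : Fin M → ℝ) (hL : 0 ≤ L)
    (z : ℕ → Fin M → ℝ) (hz : ∀ n, 0 ≤ z n) (hz0 : z 0 ≤ L)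
    (hrec : ∀ n, z (n + 1) ≤ H.mulVec (fun i => Real.exp (z n i) - 1))
    (hz_lim : Filter.Tendsto (fun n => ‖z n‖) Filter.atTop (nhds 0)) :
    ∃ C : ℝ, ∀ n : ℕ, z n ≤ C • (H ^ n).mulVec L := by
  rcases Nat.eq_zero_or_pos M with hM | hM
  · exact ⟨1, fun n i => (hM ▸ i).elim0⟩
  haveI : Nonempty (Fin M) := Fin.pos_iff_nonempty.mp hM
  -- step inequality
  have hstep : ∀ n, z (n + 1) ≤ Real.exp ‖z n‖ • H.mulVec (z n) := by
    intro n
    refine le_trans (hrec n) ?_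
    intro i
    simp only [Pi.smul_apply, smul_eq_mul, Matrix.mulVec, dotProduct]
    calc ∑ j, H i j * (Real.exp (z n j) - 1)
        ≤ ∑ j, H i j * (z n j * Real.exp ‖z n‖) := by
          refine Finset.sum_le_sum fun j _ => mul_le_mul_of_nonneg_left ?_ (hH i j)
          exact aux_exp_sub_one _ _ (hz n j)
            ((Real.norm_eq_abs _ ▸ le_abs_self (z n j)).trans (norm_le_pi_norm (z n) j))
      _ = Real.exp ‖z n‖ * ∑ j, H i j * z n j := by
          rw [Finset.mul_sum]; exact Finset.sum_congr rfl fun j _ => by ring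
  -- key induction
  have key : ∀ N m, z (N + m) ≤
      Real.exp (∑ k ∈ Finset.range m, ‖z (N + k)‖) • (H ^ m).mulVec (z N) := by
    intro N m
    induction m with
    | zero => simp [Matrix.one_mulVec]
    | succ m ih =>
      have h1 := hstep (N + m)
      have h2 : H.mulVec (z (N + m)) ≤
          H.mulVec (Real.exp (∑ k ∈ Finset.range m, ‖z (N + k)‖) • (H ^ m).mulVec (z N)) :=
        aux_mulVec_mono H hH ih
      have h3 : H.mulVec (Real.exp (∑ k ∈ Finset.range m, ‖z (N + k)‖) • (H ^ m).mulVec (z N))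
          = Real.exp (∑ k ∈ Finset.range m, ‖z (N + k)‖) • (H ^ (m + 1)).mulVec (z N) := by
        rw [Matrix.mulVec_smul, Matrix.mulVec_mulVec, ← pow_succ']
      rw [h3] at h2
      have h4 : z (N + (m + 1)) ≤ Real.exp ‖z (N + m)‖ •
          (Real.exp (∑ k ∈ Finset.range m, ‖z (N + k)‖) • (H ^ (m + 1)).mulVec (z N)) := by
        refine le_trans h1 ?_
        intro i
        exact mul_le_mul_of_nonneg_left (h2 i) (Real.exp_nonneg _)
      refine le_trans h4 (le_of_eq ?_)
      rw [smul_smul, ← Real.exp_add, Finset.sum_range_succ, add_comm]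
  -- norm bound
  have hnorm : ∀ N m, ‖z (N + m)‖ ≤
      Real.exp (∑ k ∈ Finset.range m, ‖z (N + k)‖) * (‖H ^ m‖ * ‖z N‖) := by
    intro N m
    have hw : ‖Real.exp (∑ k ∈ Finset.range m, ‖z (N + k)‖) • (H ^ m).mulVec (z N)‖
        ≤ Real.exp (∑ k ∈ Finset.range m, ‖z (N + k)‖) * (‖H ^ m‖ * ‖z N‖) := by
      rw [norm_smul, Real.norm_eq_abs, abs_of_nonneg (Real.exp_nonneg _)]
      exact mul_le_mul_of_nonneg_left (Matrix.linfty_opNorm_mulVec _ _) (Real.exp_nonneg _)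
    refine le_trans ?_ hw
    refine (pi_norm_le_iff_of_nonneg (norm_nonneg _)).mpr fun i => ?_
    rw [Real.norm_eq_abs, abs_of_nonneg (hz _ i)]
    exact (key N m i).trans ((le_abs_self _).trans
      ((Real.norm_eq_abs _).symm.le.trans (norm_le_pi_norm _ i)))
  -- spectral radius < 1
  have hsr : spectralRadius ℂ (H.map (Complex.ofReal ·)) < 1 := by
    obtain ⟨μ, hμ, hμeq⟩ := spectrum.exists_nnnorm_eq_spectralRadius
      (a := H.map (Complex.ofReal ·))
    rw [← hμeq]
    exact_mod_cast hspr μ hμ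
  obtain ⟨t, ht1, ht2⟩ := ENNReal.lt_iff_exists_nnreal_btwn.mp hsr
  have ht2' : (t : ℝ) < 1 := by exact_mod_cast ht2
  have ht0 : (0 : ℝ) < t := by exact_mod_cast zero_le.trans_lt ht1
  have hev : ∀ᶠ n : ℕ in Filter.atTop,
      (‖(H.map (Complex.ofReal ·)) ^ n‖₊ : ℝ≥0∞) ^ (1 / (n : ℝ)) < (t : ℝ≥0∞) :=
    Filter.Tendsto.eventually_lt_const ht1
      (spectrum.pow_nnnorm_pow_one_div_tendsto_nhds_spectralRadius (H.map (Complex.ofReal ·)))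
  obtain ⟨N₁, hN₁⟩ := Filter.eventually_atTop.mp (hev.and (Filter.eventually_ge_atTop 1))
  have hHn : ∀ n, N₁ ≤ n → ‖H ^ n‖ ≤ (t : ℝ) ^ n := by
    intro n hn
    obtain ⟨hlt, hn1⟩ := hN₁ n hn
    have hne : (n : ℝ) ≠ 0 := Nat.cast_ne_zero.mpr (by omega)
    have hle : (‖(H.map (Complex.ofReal ·)) ^ n‖₊ : ℝ≥0∞) ≤ (t : ℝ≥0∞) ^ n := by
      calc (‖(H.map (Complex.ofReal ·)) ^ n‖₊ : ℝ≥0∞)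
          = ((‖(H.map (Complex.ofReal ·)) ^ n‖₊ : ℝ≥0∞) ^ (1 / (n : ℝ))) ^ n := by
            rw [← ENNReal.rpow_natCast _ n, ← ENNReal.rpow_mul, one_div,
              inv_mul_cancel₀ hne, ENNReal.rpow_one]
        _ ≤ (t : ℝ≥0∞) ^ n := pow_le_pow_left₀ zero_le hlt.le n
    rw [← ENNReal.coe_pow, ENNReal.coe_le_coe] at hle
    rw [← aux_map_norm H n]
    exact_mod_cast hle
  -- choose ε, q
  set ε := -Real.log t / 2 with hεdef
  have hlogt : Real.log t < 0 := Real.log_neg ht0 ht2'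
  have hε : 0 < ε := by rw [hεdef]; linarith
  set q := Real.exp ε * t with hqdef
  have hq0 : 0 < q := mul_pos (Real.exp_pos _) ht0
  have hq1 : q < 1 := by
    have hq : q = Real.exp (ε + Real.log t) := by rw [Real.exp_add, Real.exp_log ht0]
    rw [hq, show ε + Real.log t = Real.log t / 2 by rw [hεdef]; ring]
    calc Real.exp (Real.log t / 2) < Real.exp 0 := Real.exp_lt_exp.mpr (by linarith)
      _ = 1 := Real.exp_zero
  obtain ⟨N, hN⟩ := Filter.eventually_atTop.mp
    (Filter.Tendsto.eventually_lt_const hε hz_lim)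
  -- geometric bound
  have hgeom : ∀ m, N₁ ≤ m → ‖z (N + m)‖ ≤ ‖z N‖ * q ^ m := by
    intro m hm
    have h1 : ∑ k ∈ Finset.range m, ‖z (N + k)‖ ≤ ε * m :=
      calc ∑ k ∈ Finset.range m, ‖z (N + k)‖ ≤ ∑ _k ∈ Finset.range m, ε :=
            Finset.sum_le_sum fun k _ => (hN (N + k) (Nat.le_add_right N k)).le
        _ = ε * m := by rw [Finset.sum_const, Finset.card_range, nsmul_eq_mul]; ring
    calc ‖z (N + m)‖ ≤ Real.exp (∑ k ∈ Finset.range m, ‖z (N + k)‖) * (‖H ^ m‖ * ‖z N‖) :=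
          hnorm N m
      _ ≤ Real.exp (ε * m) * ((t : ℝ) ^ m * ‖z N‖) := by
          have h2 := hHn m hm
          have h3 : Real.exp (∑ k ∈ Finset.range m, ‖z (N + k)‖) ≤ Real.exp (ε * m) :=
            Real.exp_le_exp.mpr h1
          have h4 : ‖H ^ m‖ * ‖z N‖ ≤ (t : ℝ) ^ m * ‖z N‖ :=
            mul_le_mul_of_nonneg_right h2 (norm_nonneg _)
          exact mul_le_mul h3 h4 (mul_nonneg (norm_nonneg _) (norm_nonneg _))
            (Real.exp_nonneg _)
      _ = ‖z N‖ * q ^ m := by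
          rw [hqdef, mul_pow, ← Real.exp_nat_mul]; ring_nf
  -- summability
  have hsum : Summable fun n => ‖z n‖ := by
    rw [← summable_nat_add_iff (N + N₁)]
    refine Summable.of_nonneg_of_le (fun m => norm_nonneg _) (fun m => ?_)
      ((summable_geometric_of_lt_one hq0.le hq1).mul_left (‖z N‖ * q ^ N₁))
    have hm : m + (N + N₁) = N + (N₁ + m) := by ring
    rw [hm]
    calc ‖z (N + (N₁ + m))‖ ≤ ‖z N‖ * q ^ (N₁ + m) := hgeom (N₁ + m) (Nat.le_add_right _ _)
      _ = ‖z N‖ * q ^ N₁ * q ^ m := by rw [pow_add]; ring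
  -- conclusion
  refine ⟨Real.exp (∑' n, ‖z n‖), fun n => ?_⟩
  have h0 := key 0 n
  simp only [zero_add] at h0
  intro i
  have hwsi : 0 ≤ ((H ^ n).mulVec L) i := by
    simp only [Matrix.mulVec, dotProduct]
    exact Finset.sum_nonneg fun j _ => mul_nonneg (aux_pow_nonneg H hH n i j) (hL j)
  calc z n i ≤ Real.exp (∑ k ∈ Finset.range n, ‖z k‖) * ((H ^ n).mulVec (z 0)) i := h0 i
    _ ≤ Real.exp (∑ k ∈ Finset.range n, ‖z k‖) * ((H ^ n).mulVec L) i :=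
        mul_le_mul_of_nonneg_left (aux_mulVec_mono _ (aux_pow_nonneg H hH n) hz0 i)
          (Real.exp_nonneg _)
    _ ≤ Real.exp (∑' k, ‖z k‖) * ((H ^ n).mulVec L) i := by
        refine mul_le_mul_of_nonneg_right (Real.exp_le_exp.mpr ?_) hwsi
        exact Summable.sum_le_tsum (Finset.range n) (fun k _ => norm_nonneg _) hsum
    _ = (Real.exp (∑' k, ‖z k‖) • (H ^ n).mulVec L) i := rfl
end

section
/- Let v, w : ℝ² → ℝ_{≥0} be measurable with ‖v‖ := sup_s ∫v(s,x)dx < ∞ and sup_x ∫w(x,t)dt < ∞. Define R_v(s,t) = ∫_t^∞ v(s,x)dx, R_v^∞(d) = sup_s R_v(s, s+d), and similarly for w and v⋆w, where (v⋆w)(s,t) = ∫ v(s,x)w(x,t)dx. Then for all d ≥ 0 and p ∈ [0,1], with q = 1 − p: R_{v⋆w}^∞(d) ≤ ‖v‖ · R_w^∞(q d) + R_v^∞(p d) · ‖w‖. -/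
open MeasureTheory Set

theorem stmt_14 (v w : ℝ → ℝ → ENNReal)
    (hv : Measurable (Function.uncurry v)) (hw : Measurable (Function.uncurry w))
    (hVfin : (⨆ s, ∫⁻ x, v s x) ≠ ⊤) (hWfin : (⨆ x, ∫⁻ t, w x t) ≠ ⊤) :
    ∀ d : ℝ, 0 ≤ d → ∀ p : ℝ, 0 ≤ p → p ≤ 1 →
      (⨆ s, ∫⁻ t in Ici (s + d), ∫⁻ x, v s x * w x t) ≤
        (⨆ s, ∫⁻ x, v s x) * (⨆ x, ∫⁻ t in Ici (x + (1 - p) * d), w x t) +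
          (⨆ s, ∫⁻ x in Ici (s + p * d), v s x) * (⨆ x, ∫⁻ t, w x t) := by
  intro d hd p hp hp1
  set RW : ENNReal := ⨆ x, ∫⁻ t in Ici (x + (1 - p) * d), w x t with hRW
  set W : ENNReal := ⨆ x, ∫⁻ t, w x t with hW
  refine iSup_le fun s => ?_
  have hvs : Measurable (v s) := hv.comp measurable_prodMk_left
  -- swap the order of integration
  have hswap : (∫⁻ t in Ici (s + d), ∫⁻ x, v s x * w x t) =
      ∫⁻ x, v s x * ∫⁻ t in Ici (s + d), w x t := by
    have hmeas : AEMeasurable (Function.uncurry fun t x => v s x * w x t)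
        ((volume.restrict (Ici (s + d))).prod volume) := by
      apply Measurable.aemeasurable
      exact ((hv.comp (measurable_const.prodMk measurable_snd)).mul
        (hw.comp (measurable_snd.prodMk measurable_fst)))
    rw [lintegral_lintegral_swap hmeas]
    refine lintegral_congr fun x => ?_
    exact lintegral_const_mul (v s x) (hw.comp measurable_prodMk_left)
  rw [hswap]
  -- split the integral at s + p * d
  have hsplit : (∫⁻ x, v s x * ∫⁻ t in Ici (s + d), w x t) =
      (∫⁻ x in Ici (s + p * d), v s x * ∫⁻ t in Ici (s + d), w x t) +
      ∫⁻ x in Iio (s + p * d), v s x * ∫⁻ t in Ici (s + d), w x t := by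
    rw [← compl_Ici (a := s + p * d)]
    exact (lintegral_add_compl _ measurableSet_Ici).symm
  rw [hsplit, add_comm]
  gcongr ?_ + ?_
  · -- x < s + p * d : use tail bound on w
    calc (∫⁻ x in Iio (s + p * d), v s x * ∫⁻ t in Ici (s + d), w x t)
        ≤ ∫⁻ x in Iio (s + p * d), v s x * RW := by
          refine setLIntegral_mono' measurableSet_Iio fun x hx => ?_
          gcongr
          refine le_trans ?_ (le_iSup (fun x => ∫⁻ t in Ici (x + (1 - p) * d), w x t) x)
          refine lintegral_mono_set (Ici_subset_Ici.2 ?_)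
          have : x ≤ s + p * d := le_of_lt hx
          nlinarith
      _ ≤ ∫⁻ x, v s x * RW := setLIntegral_le_lintegral _ _
      _ = (∫⁻ x, v s x) * RW := lintegral_mul_const RW hvs
      _ ≤ (⨆ s, ∫⁻ x, v s x) * RW := by
          gcongr
          exact le_iSup (fun s => ∫⁻ x, v s x) s
  · -- x ≥ s + p * d : use full mass of w
    calc (∫⁻ x in Ici (s + p * d), v s x * ∫⁻ t in Ici (s + d), w x t)
        ≤ ∫⁻ x in Ici (s + p * d), v s x * W := by
          refine setLIntegral_mono' measurableSet_Ici fun x _ => ?_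
          gcongr
          refine le_trans (setLIntegral_le_lintegral _ _) ?_
          exact le_iSup (fun x => ∫⁻ t, w x t) x
      _ = (∫⁻ x in Ici (s + p * d), v s x) * W := lintegral_mul_const W hvs
      _ ≤ (⨆ s, ∫⁻ x in Ici (s + p * d), v s x) * W := by
          gcongr
          exact le_iSup (fun s => ∫⁻ x in Ici (s + p * d), v s x) s
end

section
/- Let v : ℝ² → ℝ_{≥0} be measurable with R_v(s,t) := ∫_t^∞ v(s,x)dx ≤ A e^{−c(t−s)} V for all s ≤ t, where A ≥ 0, c > 0, V = sup_s ∫ v(s,x)dx < ∞. Then for every 0 < ε < c, the exponentially tilted kernel v_ε(s,t) := v(s,t)e^{ε(t−s)} satisfies sup_s ∫ v_ε(s,t) dt ≤ (1 + Aε/(c−ε)) V. -/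
open MeasureTheory Set

open Filter Real Topology

lemma aux_intOn_Iic (k s t : ℝ) (hk : 0 < k) :
    IntegrableOn (fun x => Real.exp (k * (x - s))) (Iic t) := by
  have h1 : Integrable ((Iic (k * t)).indicator Real.exp) :=
    (integrable_indicator_iff measurableSet_Iic).2 (integrableOn_exp_Iic _)
  have key : Integrable ((Iic t).indicator fun x => Real.exp (k * x)) := by
    have h2 := h1.comp_mul_left' (R := k) hk.ne'
    convert h2 using 1
    funext x
    simp only [indicator_apply, mem_Iic]
    rcases le_or_gt x t with h | h
    · rw [if_pos h, if_pos (by nlinarith)]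
    · rw [if_neg (not_le.2 h), if_neg (by intro hh; nlinarith)]
  have h3 : IntegrableOn (fun x => Real.exp (k * x)) (Iic t) :=
    (integrable_indicator_iff measurableSet_Iic).1 key
  have h4 := h3.mul_const (Real.exp (-(k * s)))
  refine h4.congr (Filter.Eventually.of_forall fun x => ?_)
  show Real.exp (k * x) * Real.exp (-(k * s)) = Real.exp (k * (x - s))
  rw [← Real.exp_add]
  ring_nf

lemma aux_int_Iic (k s t : ℝ) (hk : 0 < k) :
    ∫ x in Iic t, k * Real.exp (k * (x - s)) = Real.exp (k * (t - s)) := by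
  have hderiv : ∀ x ∈ Iic t,
      HasDerivAt (fun x => Real.exp (k * (x - s))) (k * Real.exp (k * (x - s))) x := by
    intro x _
    have h1 : HasDerivAt (fun x : ℝ => k * (x - s)) k x := by
      simpa using ((hasDerivAt_id x).sub_const s).const_mul k
    simpa [mul_comm] using h1.exp
  have hint : IntegrableOn (fun x => k * Real.exp (k * (x - s))) (Iic t) :=
    (aux_intOn_Iic k s t hk).const_mul k
  have htend : Tendsto (fun x => Real.exp (k * (x - s))) atBot (𝓝 0) := by
    apply Real.tendsto_exp_atBot.comp
    exact (tendsto_const_mul_atBot_of_pos hk).2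
      (tendsto_atBot_add_const_right _ (-s) tendsto_id)
  simpa using integral_Iic_of_hasDerivAt_of_tendsto' hderiv hint htend

lemma aux_int_Ioi (d s : ℝ) (hd : 0 < d) :
    ∫ x in Ioi s, Real.exp (-(d * (x - s))) = d⁻¹ ∧
    IntegrableOn (fun x => Real.exp (-(d * (x - s)))) (Ioi s) := by
  have hderiv : ∀ x ∈ Ici s,
      HasDerivAt (fun x => -(d⁻¹ * Real.exp (-(d * (x - s))))) (Real.exp (-(d * (x - s)))) x := by
    intro x _
    have h1 : HasDerivAt (fun x : ℝ => -(d * (x - s))) (-d) x := by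
      have h0 : HasDerivAt (fun x : ℝ => d * (x - s)) d x := by
        simpa using ((hasDerivAt_id x).sub_const s).const_mul d
      exact h0.fun_neg
    have h2 := (h1.exp.const_mul d⁻¹).fun_neg
    refine h2.congr_deriv ?_
    rw [mul_neg, mul_neg, neg_neg, mul_left_comm, inv_mul_cancel₀ hd.ne', mul_one]
  have hpos : ∀ x ∈ Ioi s, 0 ≤ Real.exp (-(d * (x - s))) := fun x _ => (Real.exp_pos _).le
  have htend : Tendsto (fun x => -(d⁻¹ * Real.exp (-(d * (x - s))))) atTop (𝓝 0) := by
    have h3 : Tendsto (fun x => Real.exp (-(d * (x - s)))) atTop (𝓝 0) := by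
      apply Real.tendsto_exp_atBot.comp
      rw [tendsto_neg_atBot_iff]
      exact (tendsto_const_mul_atTop_of_pos hd).2
        (tendsto_atTop_add_const_right _ (-s) tendsto_id)
    have := ((h3.const_mul d⁻¹).neg)
    simpa using this
  constructor
  · have := integral_Ioi_of_hasDerivAt_of_nonneg' hderiv hpos htend
    simpa using this
  · exact integrableOn_Ioi_deriv_of_nonneg' hderiv hpos htend

theorem stmt_17 (v : ℝ → ℝ → ENNReal) (hv : Measurable (Function.uncurry v))
    (A c : ℝ) (hA : 0 ≤ A) (hc : 0 < c)
    (V : ENNReal) (hVdef : V = ⨆ s, ∫⁻ x, v s x) (hVfin : V ≠ ⊤)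
    (hR : ∀ s t : ℝ, s ≤ t →
      (∫⁻ x in Ici t, v s x) ≤ ENNReal.ofReal (A * Real.exp (-c * (t - s))) * V) :
    ∀ ε : ℝ, 0 < ε → ε < c →
      (⨆ s, ∫⁻ t, v s t * ENNReal.ofReal (Real.exp (ε * (t - s)))) ≤
        ENNReal.ofReal (1 + A * ε / (c - ε)) * V := by
  intro ε hε hεc
  have hd : 0 < c - ε := by linarith
  refine iSup_le fun s => ?_
  set φ : ℝ → ENNReal := fun x => ENNReal.ofReal (ε * Real.exp (ε * (x - s))) with hφ
  have hφm : Measurable φ := by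
    apply ENNReal.measurable_ofReal.comp
    fun_prop
  have hvs : Measurable (v s) :=
    hv.comp (measurable_const.prodMk measurable_id)
  -- Key 1 : the Iic lintegral of φ
  have key1 : ∀ t : ℝ, (∫⁻ x in Iic t, φ x) = ENNReal.ofReal (Real.exp (ε * (t - s))) := by
    intro t
    have hint : Integrable (fun x => ε * Real.exp (ε * (x - s)))
        (volume.restrict (Iic t)) := (aux_intOn_Iic ε s t hε).const_mul ε
    have hnn : 0 ≤ᵐ[volume.restrict (Iic t)] fun x => ε * Real.exp (ε * (x - s)) :=
      Filter.Eventually.of_forall fun x => by positivity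
    rw [hφ, ← ofReal_integral_eq_lintegral_ofReal hint hnn, aux_int_Iic ε s t hε]
  -- Key 2 : the Ioi lintegral
  have key2 : (∫⁻ x in Ioi s, ENNReal.ofReal (A * Real.exp (-c * (x - s))) * φ x)
      = ENNReal.ofReal (A * ε / (c - ε)) := by
    have heq : ∀ x : ℝ, ENNReal.ofReal (A * Real.exp (-c * (x - s))) * φ x
        = ENNReal.ofReal ((A * ε) * Real.exp (-((c - ε) * (x - s)))) := by
      intro x
      rw [hφ, ← ENNReal.ofReal_mul (by positivity)]
      congr 1
      rw [show (A * Real.exp (-c * (x - s))) * (ε * Real.exp (ε * (x - s)))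
          = (A * ε) * (Real.exp (-c * (x - s)) * Real.exp (ε * (x - s))) by ring,
        ← Real.exp_add]
      ring_nf
    simp_rw [heq]
    obtain ⟨hval, hint⟩ := aux_int_Ioi (c - ε) s hd
    have hint2 : Integrable (fun x => (A * ε) * Real.exp (-((c - ε) * (x - s))))
        (volume.restrict (Ioi s)) := hint.const_mul _
    have hnn : 0 ≤ᵐ[volume.restrict (Ioi s)]
        fun x => (A * ε) * Real.exp (-((c - ε) * (x - s))) :=
      Filter.Eventually.of_forall fun x => by positivity
    rw [← ofReal_integral_eq_lintegral_ofReal hint2 hnn, integral_const_mul, hval,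
      div_eq_mul_inv]
  -- Step: rewrite the integral using Tonelli
  have step : (∫⁻ t, v s t * ENNReal.ofReal (Real.exp (ε * (t - s))))
      = ∫⁻ x, (∫⁻ t in Ici x, v s t) * φ x := by
    have e1 : ∀ t : ℝ, v s t * ENNReal.ofReal (Real.exp (ε * (t - s)))
        = ∫⁻ x, v s t * ((Iic t).indicator φ) x := by
      intro t
      rw [lintegral_const_mul _ (hφm.indicator measurableSet_Iic),
        lintegral_indicator measurableSet_Iic, key1 t]
    simp_rw [e1]
    rw [lintegral_lintegral_swap]
    · congr 1
      funext x
      have e2 : ∀ t : ℝ, v s t * ((Iic t).indicator φ) x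
          = ((Ici x).indicator (fun t => v s t * φ x)) t := by
        intro t
        simp only [indicator_apply, mem_Iic, mem_Ici]
        rcases le_or_gt x t with h | h
        · rw [if_pos h, if_pos h]
        · rw [if_neg (not_le.2 h), if_neg (not_le.2 h), mul_zero]
      simp_rw [e2]
      rw [lintegral_indicator measurableSet_Ici]
      exact lintegral_mul_const _ hvs
    · -- AEMeasurable of uncurried
      apply Measurable.aemeasurable
      show Measurable (fun p : ℝ × ℝ => v s p.1 * ((Iic p.1).indicator φ) p.2)
      have : (fun p : ℝ × ℝ => v s p.1 * ((Iic p.1).indicator φ) p.2)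
          = fun p : ℝ × ℝ => v s p.1 * (if p.2 ≤ p.1 then φ p.2 else 0) := by
        funext p; simp [indicator_apply, mem_Iic]
      rw [this]
      exact (hvs.comp measurable_fst).mul
        (Measurable.ite (measurableSet_le measurable_snd measurable_fst)
          (hφm.comp measurable_snd) measurable_const)
  rw [step]
  -- bound the kernel
  have hVbound : ∀ x : ℝ, (∫⁻ t in Ici x, v s t) ≤ V := fun x =>
    (setLIntegral_le_lintegral _ _).trans (hVdef ▸ le_iSup (fun s => ∫⁻ x, v s x) s)
  have hmono : (∫⁻ x, (∫⁻ t in Ici x, v s t) * φ x)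
      ≤ ∫⁻ x, (if x ≤ s then V else ENNReal.ofReal (A * Real.exp (-c * (x - s))) * V) * φ x := by
    refine lintegral_mono fun x => ?_
    rcases le_or_gt x s with h | h
    · rw [if_pos h]; exact mul_le_mul_left (hVbound x) _
    · rw [if_neg (not_le.2 h)]; exact mul_le_mul_left (hR s x h.le) _
  refine hmono.trans ?_
  rw [← lintegral_add_compl _ (measurableSet_Iic (a := s)), compl_Iic]
  have p1 : (∫⁻ x in Iic s,
      (if x ≤ s then V else ENNReal.ofReal (A * Real.exp (-c * (x - s))) * V) * φ x) = V := by
    rw [setLIntegral_congr_fun measurableSet_Iic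
      (fun x (hx : x ∈ Iic s) => by
        rw [if_pos (mem_Iic.1 hx)])]
    rw [lintegral_const_mul V hφm, key1 s]
    simp
  have p2 : (∫⁻ x in Ioi s,
      (if x ≤ s then V else ENNReal.ofReal (A * Real.exp (-c * (x - s))) * V) * φ x)
      = ENNReal.ofReal (A * ε / (c - ε)) * V := by
    rw [setLIntegral_congr_fun measurableSet_Ioi
      (fun x (hx : x ∈ Ioi s) => by
        rw [if_neg (not_le.2 (mem_Ioi.1 hx))])]
    calc (∫⁻ x in Ioi s, ENNReal.ofReal (A * Real.exp (-c * (x - s))) * V * φ x)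
        = ∫⁻ x in Ioi s, V * (ENNReal.ofReal (A * Real.exp (-c * (x - s))) * φ x) := by
          congr 1; funext x; ring
      _ = V * ∫⁻ x in Ioi s, ENNReal.ofReal (A * Real.exp (-c * (x - s))) * φ x := by
          rw [lintegral_const_mul V]
          exact ((ENNReal.measurable_ofReal.comp (by fun_prop)).mul hφm)
      _ = V * ENNReal.ofReal (A * ε / (c - ε)) := by rw [key2]
      _ = ENNReal.ofReal (A * ε / (c - ε)) * V := mul_comm _ _
  rw [p1, p2]
  have : ENNReal.ofReal (1 + A * ε / (c - ε)) = 1 + ENNReal.ofReal (A * ε / (c - ε)) := by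
    rw [ENNReal.ofReal_add (by norm_num) (by positivity), ENNReal.ofReal_one]
  rw [this, add_mul, one_mul]
end

section
/- Let H be a nonnegative M×M matrix and u ∈ ℝ_+^M. Suppose x, y ∈ ℝ_+^M both satisfy x = u + H(e^x − 1), y = u + H(e^y − 1) (exponential coordinatewise), x ≼ y, and the matrix H·diag(e^y) has spectral radius strictly less than 1. Then x = y. -/
open Filter Topology
open scoped Matrix

attribute [local instance] Matrix.linftyOpNormedRing Matrix.linftyOpNormedAlgebra

private lemma spr_lt_one {M : ℕ} (B : Matrix (Fin M) (Fin M) ℂ)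
    (h : ∀ μ ∈ spectrum ℂ B, ‖μ‖ < 1) : spectralRadius ℂ B < 1 := by
  rw [spectralRadius]
  rcases (spectrum ℂ B).eq_empty_or_nonempty with he | hne
  · simp [he]
  · rw [← sSup_image]
    have hfin : ((fun k => (‖k‖₊ : ENNReal)) '' spectrum ℂ B).Finite :=
      (Matrix.finite_spectrum B).image _
    obtain ⟨μ, hμ, hμ2⟩ := (hne.image _).csSup_mem hfin
    rw [← hμ2]
    show (‖μ‖₊ : ENNReal) < 1
    exact_mod_cast h μ hμ

private lemma norm_pow_tendsto {M : ℕ} (B : Matrix (Fin M) (Fin M) ℂ)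
    (h : spectralRadius ℂ B < 1) :
    Tendsto (fun n => ‖B ^ n‖) atTop (𝓝 0) := by
  have gel := spectrum.pow_nnnorm_pow_one_div_tendsto_nhds_spectralRadius B
  obtain ⟨r, hr1, hr2⟩ := exists_between h
  have hev : ∀ᶠ n : ℕ in atTop, (‖B ^ n‖₊ : ENNReal) < r ^ n := by
    filter_upwards [Tendsto.eventually_lt_const hr1 gel, eventually_ge_atTop 1]
      with n hn hn1
    have hne : (n : ℝ) ≠ 0 := by positivity
    calc (‖B ^ n‖₊ : ENNReal) = ((‖B ^ n‖₊ : ENNReal) ^ (1 / (n:ℝ))) ^ (n : ℕ) := by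
          rw [← ENNReal.rpow_natCast _ n, ← ENNReal.rpow_mul, one_div,
            inv_mul_cancel₀ hne, ENNReal.rpow_one]
      _ < r ^ n := ENNReal.pow_lt_pow_left (by omega) hn
  have h0 : Tendsto (fun n : ℕ => (r : ENNReal) ^ n) atTop (𝓝 0) :=
    ENNReal.tendsto_pow_atTop_nhds_zero_of_lt_one hr2
  have h1 : Tendsto (fun n : ℕ => (‖B ^ n‖₊ : ENNReal)) atTop (𝓝 0) := by
    apply tendsto_of_tendsto_of_tendsto_of_le_of_le' tendsto_const_nhds h0
    · exact Eventually.of_forall fun n => zero_le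
    · exact hev.mono fun n hn => hn.le
  have h2 : Tendsto (fun n : ℕ => ‖B ^ n‖₊) atTop (𝓝 0) := by
    rw [← ENNReal.coe_zero] at h1
    exact ENNReal.tendsto_coe.mp h1
  simpa using NNReal.tendsto_coe.mpr h2

private lemma norm_map_ofReal {M : ℕ} (A : Matrix (Fin M) (Fin M) ℝ) :
    ‖A.map (Complex.ofReal ·)‖ = ‖A‖ := by
  rw [← coe_nnnorm, ← coe_nnnorm]
  congr 1
  rw [Matrix.linfty_opNNNorm_def, Matrix.linfty_opNNNorm_def]
  simp [Matrix.map_apply, Complex.nnnorm_real]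

theorem stmt_18 {M : ℕ} (H : Matrix (Fin M) (Fin M) ℝ)
    (hH : ∀ i j, 0 ≤ H i j) (u x y : Fin M → ℝ)
    (hu : 0 ≤ u) (hx : 0 ≤ x) (hy : 0 ≤ y)
    (hfx : x = u + H.mulVec (fun i => Real.exp (x i) - 1))
    (hfy : y = u + H.mulVec (fun i => Real.exp (y i) - 1))
    (hxy : x ≤ y)
    (hspr : ∀ μ ∈ spectrum ℂ
        (((H * Matrix.diagonal fun i => Real.exp (y i)).map (Complex.ofReal ·))),
      ‖μ‖ < 1) :
    x = y := by
  set A : Matrix (Fin M) (Fin M) ℝ := H * Matrix.diagonal fun i => Real.exp (y i) with hA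
  set d : Fin M → ℝ := y - x with hdd
  have hd : ∀ i, 0 ≤ d i := fun i => sub_nonneg.mpr (hxy i)
  -- d = H.mulVec (e^y - e^x)
  have h1 : d = H.mulVec (fun i => Real.exp (y i) - Real.exp (x i)) := by
    have hv : (fun i => Real.exp (y i) - Real.exp (x i))
        = (fun i => Real.exp (y i) - 1) - (fun i => Real.exp (x i) - 1) := by
      funext i; simp only [Pi.sub_apply]; ring
    rw [hdd, hv, Matrix.mulVec_sub]
    nth_rewrite 1 [hfy, hfx]
    abel
  -- A nonneg
  have hAnn : ∀ i j, 0 ≤ A i j := by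
    intro i j
    rw [hA, Matrix.mul_diagonal]
    exact mul_nonneg (hH i j) (Real.exp_pos _).le
  -- monotonicity of mulVec for nonneg matrices
  have hmono : ∀ (C : Matrix (Fin M) (Fin M) ℝ), (∀ i j, 0 ≤ C i j) →
      ∀ v w : Fin M → ℝ, v ≤ w → C.mulVec v ≤ C.mulVec w := by
    intro C hC v w hvw i
    simp only [Matrix.mulVec, dotProduct]
    exact Finset.sum_le_sum fun j _ => mul_le_mul_of_nonneg_left (hvw j) (hC i j)
  -- powers of A are nonneg
  have hApow : ∀ n : ℕ, ∀ i j, 0 ≤ (A ^ n) i j := by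
    intro n
    induction n with
    | zero => intro i j; simp [Matrix.one_apply]; positivity
    | succ n ih =>
      intro i j
      rw [pow_succ, Matrix.mul_apply]
      exact Finset.sum_nonneg fun k _ => mul_nonneg (ih i k) (hAnn k j)
  -- d ≤ A.mulVec d
  have h2 : d ≤ A.mulVec d := by
    intro i
    conv_lhs => rw [h1]
    simp only [Matrix.mulVec, dotProduct]
    apply Finset.sum_le_sum
    intro k _
    rw [hA, Matrix.mul_diagonal]
    have hexp := Real.add_one_le_exp (x k - y k)
    have hpos := Real.exp_pos (y k)
    have : Real.exp (y k) * (x k - y k + 1) ≤ Real.exp (x k) := by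
      calc Real.exp (y k) * (x k - y k + 1) ≤ Real.exp (y k) * Real.exp (x k - y k) :=
            mul_le_mul_of_nonneg_left hexp hpos.le
        _ = Real.exp (x k) := by rw [← Real.exp_add]; ring_nf
    have hkey : Real.exp (y k) - Real.exp (x k) ≤ Real.exp (y k) * d k := by
      have : d k = y k - x k := rfl
      nlinarith
    calc H i k * (Real.exp (y k) - Real.exp (x k))
        ≤ H i k * (Real.exp (y k) * d k) := mul_le_mul_of_nonneg_left hkey (hH i k)
      _ = H i k * Real.exp (y k) * d k := by ring
  -- d ≤ (A^n).mulVec d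
  have h3 : ∀ n : ℕ, d ≤ (A ^ n).mulVec d := by
    intro n
    induction n with
    | zero => simp [Matrix.one_mulVec]
    | succ n ih =>
      calc d ≤ (A ^ n).mulVec d := ih
        _ ≤ (A ^ n).mulVec (A.mulVec d) := hmono _ (hApow n) _ _ h2
        _ = (A ^ (n+1)).mulVec d := by rw [Matrix.mulVec_mulVec, ← pow_succ]
  -- norm bound and limit
  set B : Matrix (Fin M) (Fin M) ℂ := A.map (Complex.ofReal ·) with hB
  have hBpow : ∀ n : ℕ, B ^ n = (A ^ n).map (Complex.ofReal ·) := by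
    intro n
    have : (A ^ n).map (Complex.ofReal ·) = Complex.ofRealHom.mapMatrix (A ^ n) := rfl
    rw [this, map_pow]
    rfl
  have hlim : Tendsto (fun n : ℕ => ‖A ^ n‖ * ‖d‖) atTop (𝓝 0) := by
    have := norm_pow_tendsto B (spr_lt_one B hspr)
    have heq : (fun n : ℕ => ‖B ^ n‖) = fun n : ℕ => ‖A ^ n‖ := by
      funext n; rw [hBpow n, norm_map_ofReal]
    rw [heq] at this
    simpa using this.mul_const ‖d‖
  have hfinal : ∀ i, d i = 0 := by
    intro i
    have hub : ∀ n : ℕ, d i ≤ ‖A ^ n‖ * ‖d‖ := by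
      intro n
      calc d i ≤ ((A ^ n).mulVec d) i := h3 n i
        _ ≤ ‖((A ^ n).mulVec d) i‖ := le_abs_self _
        _ ≤ ‖(A ^ n).mulVec d‖ := norm_le_pi_norm _ i
        _ ≤ ‖A ^ n‖ * ‖d‖ := Matrix.linfty_opNorm_mulVec _ _
    have := ge_of_tendsto' hlim hub
    linarith [hd i]
  funext i
  have := hfinal i
  have : y i - x i = 0 := this
  linarith
end

section
/- Let H be a nonnegative M×M matrix, let E = { u ∈ ℝ_+^M : ∃ x ∈ ℝ_+^M, x = u + H(e^x − 1) } (exponential coordinatewise). Then E is convex, and downward closed in ℝ_+^M: if u ∈ E and 0 ≼ v ≼ u then v ∈ E. -/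
open Real

private lemma mulVec_mono {M : ℕ} (H : Matrix (Fin M) (Fin M) ℝ)
    (hH : ∀ i j, 0 ≤ H i j) {a b : Fin M → ℝ} (hab : a ≤ b) :
    H.mulVec a ≤ H.mulVec b := by
  intro i
  simp only [Matrix.mulVec, dotProduct]
  exact Finset.sum_le_sum fun j _ => mul_le_mul_of_nonneg_left (hab j) (hH i j)

private lemma key {M : ℕ} (H : Matrix (Fin M) (Fin M) ℝ)
    (hH : ∀ i j, 0 ≤ H i j) (w b : Fin M → ℝ) (hw : 0 ≤ w) (hb : 0 ≤ b)
    (hfb : w + H.mulVec (fun i => Real.exp (b i) - 1) ≤ b) :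
    ∃ x : Fin M → ℝ, 0 ≤ x ∧ x = w + H.mulVec (fun i => Real.exp (x i) - 1) := by
  set ψ : (Fin M → ℝ) → (Fin M → ℝ) :=
    fun y => w + H.mulVec (fun i => Real.exp (y i) - 1) with hψ
  have hmono : ∀ y y', y ≤ y' → ψ y ≤ ψ y' := by
    intro y y' h
    exact add_le_add_right (mulVec_mono H hH fun j => by
      simpa using Real.exp_le_exp.2 (h j)) w
  have h0S : (0 : Fin M → ℝ) ≤ b ∧ (0 : Fin M → ℝ) ≤ ψ 0 := by
    refine ⟨hb, ?_⟩
    intro i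
    simp only [hψ, Pi.add_apply, Pi.zero_apply, Real.exp_zero, sub_self]
    have : H.mulVec (fun _ => (0:ℝ)) i = 0 := by
      simp [Matrix.mulVec, dotProduct]
    simpa [this] using hw i
  set S : Set (Fin M → ℝ) := {y | y ≤ b ∧ y ≤ ψ y} with hS
  have h0 : (0 : Fin M → ℝ) ∈ S := h0S
  set z : Fin M → ℝ := fun i => sSup ((fun y => y i) '' S) with hz
  have hbdd : ∀ i, BddAbove ((fun y => y i) '' S) := fun i =>
    ⟨b i, by rintro _ ⟨y, hy, rfl⟩; exact hy.1 i⟩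
  have hne : ∀ i, ((fun y => y i) '' S).Nonempty := fun i => ⟨0, 0, h0, rfl⟩
  have hzle : ∀ y ∈ S, y ≤ z := fun y hy i => le_csSup (hbdd i) ⟨y, hy, rfl⟩
  have hzb : z ≤ b := fun i => csSup_le (hne i) (by rintro _ ⟨y, hy, rfl⟩; exact hy.1 i)
  have hzψ : z ≤ ψ z := fun i => csSup_le (hne i)
    (by rintro _ ⟨y, hy, rfl⟩; exact (hy.2.trans (hmono y z (hzle y hy))) i)
  have hψzS : ψ z ∈ S := ⟨(hmono z b hzb).trans hfb, hmono z (ψ z) hzψ⟩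
  have hψzz : ψ z ≤ z := hzle _ hψzS
  exact ⟨z, hzle 0 h0, le_antisymm hzψ hψzz⟩

theorem stmt_19 {M : ℕ} (H : Matrix (Fin M) (Fin M) ℝ)
    (hH : ∀ i j, 0 ≤ H i j)
    (E : Set (Fin M → ℝ))
    (hE : E = {u | 0 ≤ u ∧
      ∃ x : Fin M → ℝ, 0 ≤ x ∧ x = u + H.mulVec (fun i => Real.exp (x i) - 1)}) :
    Convex ℝ E ∧ ∀ u ∈ E, ∀ v : Fin M → ℝ, 0 ≤ v → v ≤ u → v ∈ E := by
  subst hE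
  constructor
  · -- convexity
    rintro u ⟨hu0, x, hx0, hx⟩ v ⟨hv0, y, hy0, hy⟩ p q hp hq hpq
    refine ⟨?_, ?_⟩
    · intro i
      simp only [Pi.add_apply, Pi.smul_apply, smul_eq_mul, Pi.zero_apply]
      exact add_nonneg (mul_nonneg hp (hu0 i)) (mul_nonneg hq (hv0 i))
    · have hc0 : (0:Fin M → ℝ) ≤ p • x + q • y := by
        intro i
        simp only [Pi.add_apply, Pi.smul_apply, smul_eq_mul, Pi.zero_apply]
        exact add_nonneg (mul_nonneg hp (hx0 i)) (mul_nonneg hq (hy0 i))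
      have hexp : (fun i => Real.exp ((p • x + q • y) i) - 1) ≤
          p • (fun i => Real.exp (x i) - 1) + q • (fun i => Real.exp (y i) - 1) := by
        intro i
        simp only [Pi.add_apply, Pi.smul_apply, smul_eq_mul]
        have := convexOn_exp.2 (Set.mem_univ (x i)) (Set.mem_univ (y i)) hp hq hpq
        simp only [smul_eq_mul] at this
        nlinarith [this]
      have hfb : (p • u + q • v) + H.mulVec (fun i => Real.exp ((p • x + q • y) i) - 1)
          ≤ p • x + q • y := by
        calc (p • u + q • v) + H.mulVec (fun i => Real.exp ((p • x + q • y) i) - 1)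
            ≤ (p • u + q • v) + H.mulVec
              (p • (fun i => Real.exp (x i) - 1) + q • (fun i => Real.exp (y i) - 1)) :=
              add_le_add_right (mulVec_mono H hH hexp) _
          _ = p • (u + H.mulVec (fun i => Real.exp (x i) - 1))
              + q • (v + H.mulVec (fun i => Real.exp (y i) - 1)) := by
              rw [Matrix.mulVec_add, Matrix.mulVec_smul, Matrix.mulVec_smul]
              module
          _ = p • x + q • y := by rw [← hx, ← hy]
      obtain ⟨zz, hzz0, hzzeq⟩ := key H hH (p • u + q • v) (p • x + q • y)
        (by intro i; simp only [Pi.add_apply, Pi.smul_apply, smul_eq_mul, Pi.zero_apply];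
            exact add_nonneg (mul_nonneg hp (hu0 i)) (mul_nonneg hq (hv0 i))) hc0 hfb
      exact ⟨zz, hzz0, hzzeq⟩
  · -- downward closed
    rintro u ⟨hu0, x, hx0, hx⟩ v hv0 hvu
    refine ⟨hv0, ?_⟩
    have hfb : v + H.mulVec (fun i => Real.exp (x i) - 1) ≤ x := by
      calc v + H.mulVec (fun i => Real.exp (x i) - 1)
          ≤ u + H.mulVec (fun i => Real.exp (x i) - 1) := add_le_add_left hvu _
        _ = x := hx.symm
    exact key H hH v x hv0 hx0 hfb
end
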